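/- For every standard sentence s in the language of T: if T proves ¬D(E_s(v)), then T proves remote(⁰⌜s⌝); and if T proves D(E_s(v)), then T proves ¬remote(⁰⌜s⌝). -/

import Mathlib

open FirstOrder FirstOrder.Language

namespace GodelStalk

/-- Function symbols of the first-order language of arithmetic:
zero, successor, addition, multiplication. -/
inductive ArithFunc : ℕ → Type
  | zero : ArithFunc 0
  | succ : ArithFunc 1
  | add : ArithFunc 2
  | mul : ArithFunc 2

/-- Relation symbols of the first-order language of arithmetic: `≤`. -/
inductive ArithRel : ℕ → Type
  | le : ArithRel 2

/-- The first-order language of arithmetic. -/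
def Larith : FirstOrder.Language := ⟨ArithFunc, ArithRel⟩

/-- The numeral `⁰n`: `n`-many repeated applications of the successor symbol to zero. -/
def num {α : Type} : ℕ → Larith.Term α
  | 0 => Term.func ArithFunc.zero ![]
  | n + 1 => Term.func ArithFunc.succ ![num n]

/-- Successor term. -/
def succT {α : Type} (t : Larith.Term α) : Larith.Term α :=
  Term.func ArithFunc.succ ![t]

/-- Addition term. -/
def addT {α : Type} (t u : Larith.Term α) : Larith.Term α :=
  Term.func ArithFunc.add ![t, u]

/-- Multiplication term. -/
def mulT {α : Type} (t u : Larith.Term α) : Larith.Term α :=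
  Term.func ArithFunc.mul ![t, u]

/-- The formula `t ≤ u`. -/
def leF {α : Type} (t u : Larith.Term α) : Larith.Formula α :=
  Relations.formula₂ ArithRel.le t u

/-- The formula `t < u`, rendered as `S t ≤ u`. -/
def ltF {α : Type} (t u : Larith.Term α) : Larith.Formula α :=
  leF (succT t) u

/-- Universal quantification over one extra variable. -/
noncomputable def all1 {α : Type} (φ : Larith.Formula (α ⊕ Fin 1)) : Larith.Formula α :=
  Formula.iAlls (Fin 1) φ

/-- Existential quantification over one extra variable. -/
noncomputable def ex1 {α : Type} (φ : Larith.Formula (α ⊕ Fin 1)) : Larith.Formula α :=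
  Formula.iExs (Fin 1) φ

/-- Substitute a term for the unique free variable of a formula. -/
def app1 {α : Type} (φ : Larith.Formula (Fin 1)) (t : Larith.Term α) : Larith.Formula α :=
  φ.subst fun _ => t

/-- Substitute two terms for the two free variables of a formula. -/
def app2 {α : Type} (φ : Larith.Formula (Fin 2)) (t u : Larith.Term α) : Larith.Formula α :=
  φ.subst ![t, u]

/-- Substitute a term for the distinguished (`Sum.inr`) free variable of a formula. -/
def substLast {α : Type} (φ : Larith.Formula (α ⊕ Fin 1)) (t : Larith.Term α) :
    Larith.Formula α :=
  φ.subst (Sum.elim Term.var fun _ => t)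

/-- `isMinOf φ t` expresses `t = min z : φ(z)`, i.e. `φ(t) ∧ ∀ w < t, ¬φ(w)`. -/
noncomputable def isMinOf {α : Type} (φ : Larith.Formula (α ⊕ Fin 1)) (t : Larith.Term α) :
    Larith.Formula α :=
  substLast φ t ⊓ all1 (ltF (Term.var (Sum.inr 0)) (t.relabel Sum.inl) ⟹ ∼φ)

/-- `minProofOf pf c t` expresses `t = min z : pf(z, c)`. -/
noncomputable def minProofOf {α : Type} (pf : Larith.Formula (Fin 2)) (c t : Larith.Term α) :
    Larith.Formula α :=
  isMinOf (app2 pf (Term.var (Sum.inr 0)) (c.relabel Sum.inl)) t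

/-- Provability within the theory `T` (semantic consequence, which by the Gödel
completeness theorem coincides with first-order provability). -/
def Proves (T : Larith.Theory) (φ : Larith.Sentence) : Prop :=
  T ⊨ᵇ φ

/-- `T` is consistent. -/
def Consistent (T : Larith.Theory) : Prop :=
  ¬ Proves T ⊥

/-- `T` is complete: it decides every sentence. -/
def Complete (T : Larith.Theory) : Prop :=
  ∀ φ : Larith.Sentence, Proves T φ ∨ Proves T (∼φ)

/-- Universal closure over `Fin k`-many free variables. -/
noncomputable def closure {k : ℕ} (φ : Larith.Formula (Fin k)) : Larith.Sentence :=
  Formula.iAlls (Fin k) (φ.relabel Sum.inr : Larith.Formula (Empty ⊕ Fin k))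

/-- The axioms of Robinson arithmetic `Q` (with `≤` defined from addition). -/
noncomputable def QTheory : Larith.Theory :=
  { closure (∼(Term.equal (succT (Term.var (0 : Fin 1))) (num 0))),
    closure (Term.equal (succT (Term.var (0 : Fin 2))) (succT (Term.var 1)) ⟹
      Term.equal (Term.var 0) (Term.var (1 : Fin 2))),
    closure (∼(Term.equal (Term.var (0 : Fin 1)) (num 0)) ⟹
      ex1 (Term.equal (Term.var (Sum.inl 0)) (succT (Term.var (Sum.inr (0 : Fin 1)))) :
        Larith.Formula (Fin 1 ⊕ Fin 1))),
    closure (Term.equal (addT (Term.var (0 : Fin 1)) (num 0)) (Term.var 0)),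
    closure (Term.equal (addT (Term.var (0 : Fin 2)) (succT (Term.var 1)))
      (succT (addT (Term.var 0) (Term.var (1 : Fin 2))))),
    closure (Term.equal (mulT (Term.var (0 : Fin 1)) (num 0)) (num 0)),
    closure (Term.equal (mulT (Term.var (0 : Fin 2)) (succT (Term.var 1)))
      (addT (mulT (Term.var 0) (Term.var 1)) (Term.var (0 : Fin 2)))),
    closure ((leF (Term.var (0 : Fin 2)) (Term.var 1)) ⇔
      ex1 (Term.equal (addT (Term.var (Sum.inr (0 : Fin 1))) (Term.var (Sum.inl 0)))
        (Term.var (Sum.inl (1 : Fin 2))))) }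

/-- The induction axiom for a formula `φ` with parameters `Fin k` and induction
variable the distinguished `Sum.inr` variable. -/
noncomputable def inductionSentence {k : ℕ} (φ : Larith.Formula (Fin k ⊕ Fin 1)) :
    Larith.Sentence :=
  closure ((substLast φ (num 0) ⊓
      all1 (φ ⟹ φ.subst (Sum.elim (Term.var ∘ Sum.inl)
        fun _ => succT (Term.var (Sum.inr 0))))) ⟹
    all1 φ)

/-- Peano Arithmetic: Robinson arithmetic together with the induction scheme. -/
noncomputable def PATheory : Larith.Theory :=
  QTheory ∪ { σ | ∃ (k : ℕ) (φ : Larith.Formula (Fin k ⊕ Fin 1)), σ = inductionSentence φ }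


/-! ### The extension `E_s(v)`, `remote`, and `𝔎` (minimality version) -/

/-- `extFormulaAt pf c t` is the extension formula `E_s` of the sentence `s` with
Gödel code `c`, evaluated at the term `t`:
`∀x ∀y (Proof_T(x, t) ∧ [y = min z : Proof_T(z, ⁰c)] → x ≥ y)`. -/
noncomputable def extFormulaAt {α : Type} (pf : Larith.Formula (Fin 2)) (c : ℕ)
    (t : Larith.Term α) : Larith.Formula α :=
  Formula.iAlls (Fin 2)
    ((app2 pf (Term.var (Sum.inr 0)) (t.relabel Sum.inl) ⊓
        minProofOf pf (num c) (Term.var (Sum.inr 1))) ⟹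
      leF (Term.var (Sum.inr 1)) (Term.var (Sum.inr 0)))

/-- The extension `E_s(v)` of the sentence `s` with Gödel code `c`, as a formula
in the single free variable `v`. -/
noncomputable def extFormula (pf : Larith.Formula (Fin 2)) (c : ℕ) :
    Larith.Formula (Fin 1) :=
  extFormulaAt pf c (Term.var 0)

/-- `remoteAt pf dgn t` is the formula `remote(t)`:
`∃x ∃k ∃z (Dgn(x, t) ∧ k = min n : Proof_T(n, t) ∧ z = min m : Proof_T(m, x) ∧ z < k)`. -/
noncomputable def remoteAt {α : Type} (pf dgn : Larith.Formula (Fin 2))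
    (t : Larith.Term α) : Larith.Formula α :=
  Formula.iExs (Fin 3)
    (app2 dgn (Term.var (Sum.inr 0)) (t.relabel Sum.inl) ⊓
      minProofOf pf (t.relabel Sum.inl) (Term.var (Sum.inr 1)) ⊓
      minProofOf pf (Term.var (Sum.inr 0)) (Term.var (Sum.inr 2)) ⊓
      ltF (Term.var (Sum.inr 2)) (Term.var (Sum.inr 1)))

/-- `∃y (remote(y) ∧ Proof_T(t, y))` : `t` is (the code of) a proof of a remote sentence. -/
noncomputable def provesRemoteAt {α : Type} (pf dgn : Larith.Formula (Fin 2))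
    (t : Larith.Term α) : Larith.Formula α :=
  ex1 (remoteAt pf dgn (Term.var (Sum.inr 0)) ⊓
    app2 pf (t.relabel Sum.inl) (Term.var (Sum.inr 0)))

/-- `isKAt pf dgn t` is the defining condition `t = 𝔎`, that is,
`t = min k : ∃y (remote(y) ∧ Proof_T(k, y))`. -/
noncomputable def isKAt {α : Type} (pf dgn : Larith.Formula (Fin 2))
    (t : Larith.Term α) : Larith.Formula α :=
  isMinOf (provesRemoteAt pf dgn (Term.var (Sum.inr 0))) t

/-- `geqKAt pf dgn t` expresses `t ≥ 𝔎`: `∀w (w = 𝔎 → w ≤ t)`. -/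
noncomputable def geqKAt {α : Type} (pf dgn : Larith.Formula (Fin 2))
    (t : Larith.Term α) : Larith.Formula α :=
  all1 (isKAt pf dgn (Term.var (Sum.inr 0)) ⟹
    leF (Term.var (Sum.inr 0)) (t.relabel Sum.inl))

/-- A bundle of the standard arithmetization data for the recursively axiomatized
theory `T`: Gödel's arithmetized proof predicate `ProofF` (i.e. `Proof_T`), a Gödel
coding `code` of sentences, Rosser's arithmetized negation function `negfn`, and the
syntactic diagonalization operator `diag` (satisfying the diagonal lemma). -/
structure GodelSetting (T : Larith.Theory) : Type where
  /-- Gödel's arithmetized provability predicate `Proof_T(x, y)`. -/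
  ProofF : Larith.Formula (Fin 2)
  /-- The arithmetical formula `Dgn(x, y)`. -/
  DgnF : Larith.Formula (Fin 2)
  /-- Gödel coding of sentences. -/
  code : Larith.Sentence → ℕ
  /-- Rosser's arithmetized negation function. -/
  negfn : ℕ → ℕ
  /-- The syntactic diagonalization `φ(v) ↦ D(φ(v))`. -/
  diag : Larith.Formula (Fin 1) → Larith.Sentence
  /-- The diagonal lemma: `T ⊢ D(φ) ↔ φ(⁰⌜D(φ)⌝)`. -/
  diag_spec : ∀ φ : Larith.Formula (Fin 1),
    Proves T (diag φ ⇔ app1 φ (num (code (diag φ))))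
  /-- If `T ⊢ s` then some standard natural number codes a proof of `s`. -/
  proof_complete : ∀ s : Larith.Sentence, Proves T s →
    ∃ n : ℕ, Proves T (app2 ProofF (num n) (num (code s)))
  /-- Conversely, a standardly coded internal proof of `s` yields `T ⊢ s`. -/
  proof_sound : ∀ (s : Larith.Sentence) (n : ℕ),
    Proves T (app2 ProofF (num n) (num (code s))) → Proves T s
  /-- `Proof_T` is a decidable (Δ₁) predicate on standard naturals. -/
  proof_decide : ∀ n m : ℕ,
    Proves T (app2 ProofF (num n) (num m)) ∨ Proves T (∼(app2 ProofF (num n) (num m)))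
  /-- `negfn` sends the code of a sentence to the code of its negation. -/
  negfn_spec : ∀ s : Larith.Sentence, negfn (code s) = code (∼s)

/-- The formula `Dgn(x, y)` represents in `T` the computable map sending the Gödel
code of a sentence `s` to the Gödel code of the diagonal sentence `D(E_s(v))` of
its extension: `T ⊢ Dgn(⁰⌜D(E_s(v))⌝, ⁰⌜s⌝)` and
`T ⊢ ∀x (Dgn(x, ⁰⌜s⌝) → x = ⁰⌜D(E_s(v))⌝)`. -/
def DgnRepresents (T : Larith.Theory) (G : GodelSetting T) : Prop :=
  (∀ s : Larith.Sentence,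
    Proves T (app2 G.DgnF (num (G.code (G.diag (extFormula G.ProofF (G.code s)))))
      (num (G.code s)))) ∧
  (∀ s : Larith.Sentence,
    Proves T (all1 (app2 G.DgnF (Term.var (Sum.inr 0)) (num (G.code s)) ⟹
      Term.equal (Term.var (Sum.inr 0))
        (num (G.code (G.diag (extFormula G.ProofF (G.code s))))))))

/-! ### Semantic toolkit -/

section Semantics

variable {M : Type} [Larith.Structure M]

/-- zero in a model -/
def z0 : M := Structure.funMap (L := Larith) ArithFunc.zero ![]
/-- successor in a model -/
def sS (a : M) : M := Structure.funMap (L := Larith) ArithFunc.succ ![a]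
/-- addition in a model -/
def ad (a b : M) : M := Structure.funMap (L := Larith) ArithFunc.add ![a, b]
/-- ≤ in a model -/
def le' (a b : M) : Prop := Structure.RelMap (L := Larith) ArithRel.le ![a, b]
/-- < in a model -/
def lt' (a b : M) : Prop := le' (sS a) b

/-- value of numerals -/
def numVal : ℕ → M
  | 0 => z0
  | n + 1 => sS (numVal n)

@[simp] lemma realize_num {α : Type} (v : α → M) (n : ℕ) :
    (num n : Larith.Term α).realize v = numVal n := by
  induction n with
  | zero =>
      rw [num]; erw [Term.realize_func]
      unfold numVal z0; congr; funext i; exact i.elim0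
  | succ n ih =>
      rw [num]; erw [Term.realize_func]
      unfold numVal sS; congr; funext i
      fin_cases i; simpa using ih

@[simp] lemma realize_succT {α : Type} (v : α → M) (t : Larith.Term α) :
    (succT t).realize v = sS (t.realize v) := by
  rw [succT]; erw [Term.realize_func]
  unfold sS; congr; funext i; fin_cases i; simp

@[simp] lemma realize_addT {α : Type} (v : α → M) (t u : Larith.Term α) :
    (addT t u).realize v = ad (t.realize v) (u.realize v) := by
  rw [addT]; erw [Term.realize_func]
  unfold ad; congr; funext i; fin_cases i <;> simp

@[simp] lemma realize_leF {α : Type} (v : α → M) (t u : Larith.Term α) :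
    (leF t u).Realize v ↔ le' (t.realize v) (u.realize v) := by
  rw [leF]; erw [Formula.realize_rel₂]; rfl

@[simp] lemma realize_ltF {α : Type} (v : α → M) (t u : Larith.Term α) :
    (ltF t u).Realize v ↔ lt' (t.realize v) (u.realize v) := by
  rw [ltF, realize_leF, realize_succT]; rfl

end Semantics
section Semantics2

variable {M : Type} [Larith.Structure M] {α : Type}

/-- extend an assignment by one value -/
def push (v : α → M) (a : M) : α ⊕ Fin 1 → M := Sum.elim v (fun _ => a)

@[simp] lemma realize_all1 (v : α → M) (φ : Larith.Formula (α ⊕ Fin 1)) :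
    (all1 φ).Realize v ↔ ∀ a : M, φ.Realize (push v a) := by
  rw [all1, Formula.realize_iAlls]
  constructor
  · intro h a; exact h (fun _ => a)
  · intro h i
    have e : (fun a => Sum.elim v i a) = push v (i 0) := by
      funext x; cases x with
      | inl b => rfl
      | inr b => simp [push, Fin.fin_one_eq_zero b]
    rw [e]; exact h _

@[simp] lemma realize_ex1 (v : α → M) (φ : Larith.Formula (α ⊕ Fin 1)) :
    (ex1 φ).Realize v ↔ ∃ a : M, φ.Realize (push v a) := by
  rw [ex1, Formula.realize_iExs]
  constructor
  · rintro ⟨i, h⟩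
    refine ⟨i 0, ?_⟩
    have e : Sum.elim v i = push v (i 0) := by
      funext x; cases x with
      | inl b => rfl
      | inr b => simp [push, Fin.fin_one_eq_zero b]
    rwa [e] at h
  · rintro ⟨a, h⟩; exact ⟨fun _ => a, h⟩

@[simp] lemma realize_app1 (v : α → M) (φ : Larith.Formula (Fin 1)) (t : Larith.Term α) :
    (app1 φ t).Realize v ↔ φ.Realize (fun _ => t.realize v) := by
  unfold app1 Formula.Realize
  rw [BoundedFormula.realize_subst]

@[simp] lemma realize_app2 (v : α → M) (φ : Larith.Formula (Fin 2)) (t u : Larith.Term α) :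
    (app2 φ t u).Realize v ↔ φ.Realize ![t.realize v, u.realize v] := by
  unfold app2 Formula.Realize
  rw [BoundedFormula.realize_subst]
  have e : (fun a => Term.realize v (![t, u] a)) = ![t.realize v, u.realize v] := by
    funext a; fin_cases a <;> simp
  rw [e]

@[simp] lemma realize_substLast (v : α → M) (φ : Larith.Formula (α ⊕ Fin 1))
    (t : Larith.Term α) :
    (substLast φ t).Realize v ↔ φ.Realize (push v (t.realize v)) := by
  unfold substLast Formula.Realize
  rw [BoundedFormula.realize_subst]
  have e : (fun a => Term.realize v (Sum.elim Term.var (fun _ => t) a)) = push v (t.realize v) := by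
    funext a; cases a with
    | inl b => rfl
    | inr b => rfl
  rw [e]

@[simp] lemma realize_isMinOf (v : α → M) (φ : Larith.Formula (α ⊕ Fin 1))
    (t : Larith.Term α) :
    (isMinOf φ t).Realize v ↔ φ.Realize (push v (t.realize v)) ∧
      ∀ w : M, lt' w (t.realize v) → ¬ φ.Realize (push v w) := by
  rw [isMinOf, Formula.realize_inf, realize_substLast, realize_all1]
  apply and_congr Iff.rfl
  apply forall_congr'; intro a
  rw [Formula.realize_imp, Formula.realize_not, realize_ltF, Term.realize_relabel]
  exact Iff.rfl

/-- realization of a 2-variable formula -/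
def pfR (pf : Larith.Formula (Fin 2)) (a b : M) : Prop := pf.Realize ![a, b]

/-- `n` is the minimal `pf`-proof of `c` -/
def IsMinProof (pf : Larith.Formula (Fin 2)) (c n : M) : Prop :=
  pfR pf n c ∧ ∀ w, lt' w n → ¬ pfR pf w c

@[simp] lemma realize_minProofOf (v : α → M) (pf : Larith.Formula (Fin 2))
    (c t : Larith.Term α) :
    (minProofOf pf c t).Realize v ↔ IsMinProof pf (c.realize v) (t.realize v) := by
  rw [minProofOf, realize_isMinOf]
  unfold IsMinProof pfR
  have e : ∀ a : M, Formula.Realize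
      (app2 pf (Term.var (Sum.inr 0)) (c.relabel Sum.inl)) (push v a) ↔
      pf.Realize ![a, c.realize v] := by
    intro a
    rw [realize_app2, Term.realize_relabel]
    exact Iff.rfl
  rw [e]
  apply and_congr Iff.rfl
  exact forall_congr' fun w => imp_congr Iff.rfl (not_congr (e w))

end Semantics2
section Semantics3

variable {M : Type} [Larith.Structure M] {α : Type}

lemma realize_extFormulaAt (v : α → M) (pf : Larith.Formula (Fin 2)) (cn : ℕ)
    (t : Larith.Term α) :
    (extFormulaAt pf cn t).Realize v ↔
      ∀ x y : M, pfR pf x (t.realize v) → IsMinProof pf (numVal cn) y → le' y x := by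
  rw [extFormulaAt, Formula.realize_iAlls]
  have key : ∀ i : Fin 2 → M,
      (Formula.Realize ((app2 pf (Term.var (Sum.inr 0)) (t.relabel Sum.inl) ⊓
        minProofOf pf (num cn) (Term.var (Sum.inr 1))) ⟹
          leF (Term.var (Sum.inr 1)) (Term.var (Sum.inr 0)))
        (fun a => Sum.elim v i a)) ↔
      (pfR pf (i 0) (t.realize v) ∧ IsMinProof pf (numVal cn) (i 1) → le' (i 1) (i 0)) := by
    intro i
    rw [Formula.realize_imp, Formula.realize_inf, realize_app2, realize_minProofOf,
      realize_leF, Term.realize_relabel, realize_num]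
    exact Iff.rfl
  constructor
  · intro h x y hp hm
    exact (key ![x, y]).1 (h ![x, y]) ⟨hp, hm⟩
  · intro h i
    rw [key i]
    rintro ⟨hp, hm⟩
    exact h (i 0) (i 1) hp hm

lemma realize_remoteAt (v : α → M) (pf dgn : Larith.Formula (Fin 2)) (t : Larith.Term α) :
    (remoteAt pf dgn t).Realize v ↔
      ∃ x k z : M, pfR dgn x (t.realize v) ∧ IsMinProof pf (t.realize v) k ∧
        IsMinProof pf x z ∧ lt' z k := by
  rw [remoteAt, Formula.realize_iExs]
  have key : ∀ i : Fin 3 → M,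
      (Formula.Realize (app2 dgn (Term.var (Sum.inr 0)) (t.relabel Sum.inl) ⊓
          minProofOf pf (t.relabel Sum.inl) (Term.var (Sum.inr 1)) ⊓
          minProofOf pf (Term.var (Sum.inr 0)) (Term.var (Sum.inr 2)) ⊓
          ltF (Term.var (Sum.inr 2)) (Term.var (Sum.inr 1)))
        (fun a => Sum.elim v i (id a))) ↔
      (pfR dgn (i 0) (t.realize v) ∧ IsMinProof pf (t.realize v) (i 1) ∧
        IsMinProof pf (i 0) (i 2) ∧ lt' (i 2) (i 1)) := by
    intro i
    rw [Formula.realize_inf, Formula.realize_inf, Formula.realize_inf, realize_app2,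
      realize_minProofOf, realize_minProofOf, realize_ltF, Term.realize_relabel,
      and_assoc, and_assoc]
    exact Iff.rfl
  constructor
  · rintro ⟨i, h⟩
    exact ⟨i 0, i 1, i 2, (key i).1 h⟩
  · rintro ⟨x, k, z, h⟩
    exact ⟨![x, k, z], (key ![x, k, z]).2 h⟩

lemma realize_closure {k : ℕ} (φ : Larith.Formula (Fin k)) :
    (M ⊨ closure φ) ↔ ∀ i : Fin k → M, φ.Realize i := by
  unfold closure Sentence.Realize
  rw [Formula.realize_iAlls]
  refine forall_congr' fun i => ?_
  rw [Formula.realize_relabel]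
  exact Iff.rfl

end Semantics3
section PAFacts

variable {M : Type} [Larith.Structure M]

lemma qax {k : ℕ} (φ : Larith.Formula (Fin k)) (hM : M ⊨ PATheory)
    (hmem : closure φ ∈ QTheory) : ∀ i : Fin k → M, φ.Realize i :=
  (realize_closure φ).1 (hM.realize_of_mem _ (Set.mem_union_left _ hmem))

lemma pa_q1 (hM : M ⊨ PATheory) : ∀ a : M, sS a ≠ z0 := by
  intro a
  have h := qax _ hM (Set.mem_insert _ _) (fun _ => a)
  rw [Formula.realize_not, Formula.realize_equal, realize_succT, realize_num] at h
  exact h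

lemma pa_q2 (hM : M ⊨ PATheory) : ∀ a b : M, sS a = sS b → a = b := by
  intro a b
  have h := qax _ hM (Set.mem_insert_of_mem _ (Set.mem_insert _ _)) ![a, b]
  rw [Formula.realize_imp, Formula.realize_equal, Formula.realize_equal,
    realize_succT, realize_succT] at h
  exact h

lemma pa_q3 (hM : M ⊨ PATheory) : ∀ a : M, a ≠ z0 → ∃ b : M, a = sS b := by
  intro a
  have h := qax _ hM (Set.mem_insert_of_mem _ (Set.mem_insert_of_mem _
    (Set.mem_insert _ _))) (fun _ => a)
  rw [Formula.realize_imp, Formula.realize_not, Formula.realize_equal, realize_num,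
    realize_ex1] at h
  intro ha
  obtain ⟨b, hb⟩ := h ha
  rw [Formula.realize_equal, realize_succT] at hb
  exact ⟨b, hb⟩

lemma pa_q4 (hM : M ⊨ PATheory) : ∀ a : M, ad a z0 = a := by
  intro a
  have h := qax _ hM (Set.mem_insert_of_mem _ (Set.mem_insert_of_mem _
    (Set.mem_insert_of_mem _ (Set.mem_insert _ _)))) (fun _ => a)
  rw [Formula.realize_equal, realize_addT, realize_num] at h
  exact h

lemma pa_q5 (hM : M ⊨ PATheory) : ∀ a b : M, ad a (sS b) = sS (ad a b) := by
  intro a b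
  have h := qax _ hM (Set.mem_insert_of_mem _ (Set.mem_insert_of_mem _
    (Set.mem_insert_of_mem _ (Set.mem_insert_of_mem _ (Set.mem_insert _ _))))) ![a, b]
  rw [Formula.realize_equal, realize_addT, realize_succT, realize_succT, realize_addT] at h
  exact h

lemma pa_le_iff (hM : M ⊨ PATheory) : ∀ a b : M, le' a b ↔ ∃ w : M, ad w a = b := by
  intro a b
  have h := qax _ hM (Set.mem_insert_of_mem _ (Set.mem_insert_of_mem _
    (Set.mem_insert_of_mem _ (Set.mem_insert_of_mem _ (Set.mem_insert_of_mem _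
    (Set.mem_insert_of_mem _ (Set.mem_insert_of_mem _ (Set.mem_singleton _)))))))) ![a, b]
  rw [Formula.realize_iff, realize_leF, realize_ex1] at h
  refine h.trans (exists_congr fun w => ?_)
  rw [Formula.realize_equal, realize_addT]
  exact Iff.rfl

lemma pa_ind (hM : M ⊨ PATheory) {k : ℕ} (φ : Larith.Formula (Fin k ⊕ Fin 1))
    (p : Fin k → M) (h0 : φ.Realize (push p z0))
    (hs : ∀ a, φ.Realize (push p a) → φ.Realize (push p (sS a))) :
    ∀ a, φ.Realize (push p a) := by
  have hmem : inductionSentence φ ∈ PATheory := Set.mem_union_right _ ⟨k, φ, rfl⟩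
  have H := (realize_closure _).1 (hM.realize_of_mem _ hmem) p
  rw [Formula.realize_imp, Formula.realize_inf, realize_substLast, realize_all1,
    realize_all1] at H
  intro a
  refine H ⟨?_, fun b => ?_⟩ a
  · rw [realize_num]; exact h0
  · rw [Formula.realize_imp]
    intro hb
    unfold Formula.Realize
    rw [BoundedFormula.realize_subst]
    have e : (fun c => Term.realize (push p b)
        ((Sum.elim (Term.var ∘ Sum.inl) fun _ => succT (Term.var (Sum.inr 0))) c))
        = push p (sS b) := by
      funext c
      cases c with
      | inl j => rfl
      | inr j => simp [push]
    rw [e]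
    exact hs b hb

lemma pa_zero_add (hM : M ⊨ PATheory) : ∀ a : M, ad z0 a = a := by
  have e : ∀ a : M, (Term.equal (addT (num 0) (Term.var (Sum.inr 0)))
      (Term.var (Sum.inr 0)) : Larith.Formula (Fin 0 ⊕ Fin 1)).Realize
      (push (fun i => i.elim0) a) ↔ ad z0 a = a := by
    intro a
    rw [Formula.realize_equal, realize_addT, realize_num]
    exact Iff.rfl
  intro a
  refine (e a).1 (pa_ind hM _ _ ((e z0).2 ?_) (fun b hb => (e (sS b)).2 ?_) a)
  · exact pa_q4 hM z0
  · rw [pa_q5 hM, (e b).1 hb]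

lemma pa_succ_add (hM : M ⊨ PATheory) : ∀ a b : M, ad (sS a) b = sS (ad a b) := by
  intro a
  have e : ∀ b : M, (Term.equal (addT (succT (Term.var (Sum.inl 0))) (Term.var (Sum.inr 0)))
      (succT (addT (Term.var (Sum.inl 0)) (Term.var (Sum.inr 0)))) :
      Larith.Formula (Fin 1 ⊕ Fin 1)).Realize (push (fun _ => a) b) ↔
      ad (sS a) b = sS (ad a b) := by
    intro b
    rw [Formula.realize_equal, realize_addT, realize_succT, realize_succT, realize_addT]
    exact Iff.rfl
  intro b
  refine (e b).1 (pa_ind hM _ _ ((e z0).2 ?_) (fun c hc => (e (sS c)).2 ?_) b)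
  · rw [pa_q4 hM, pa_q4 hM]
  · rw [pa_q5 hM, pa_q5 hM, (e c).1 hc]

lemma pa_add_assoc (hM : M ⊨ PATheory) : ∀ u w a : M, ad u (ad w a) = ad (ad u w) a := by
  intro u w
  have e : ∀ a : M, (Term.equal
      (addT (Term.var (Sum.inl 0)) (addT (Term.var (Sum.inl 1)) (Term.var (Sum.inr 0))))
      (addT (addT (Term.var (Sum.inl 0)) (Term.var (Sum.inl 1))) (Term.var (Sum.inr 0))) :
      Larith.Formula (Fin 2 ⊕ Fin 1)).Realize (push ![u, w] a) ↔
      ad u (ad w a) = ad (ad u w) a := by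
    intro a
    rw [Formula.realize_equal, realize_addT, realize_addT, realize_addT, realize_addT]
    exact Iff.rfl
  intro a
  refine (e a).1 (pa_ind hM _ _ ((e z0).2 ?_) (fun c hc => (e (sS c)).2 ?_) a)
  · rw [pa_q4 hM, pa_q4 hM]
  · rw [pa_q5 hM, pa_q5 hM, pa_q5 hM, (e c).1 hc]

lemma pa_le_refl (hM : M ⊨ PATheory) (a : M) : le' a a :=
  (pa_le_iff hM a a).2 ⟨z0, pa_zero_add hM a⟩

lemma pa_le_trans (hM : M ⊨ PATheory) {a b c : M} (h1 : le' a b) (h2 : le' b c) :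
    le' a c := by
  obtain ⟨w, hw⟩ := (pa_le_iff hM a b).1 h1
  obtain ⟨u, hu⟩ := (pa_le_iff hM b c).1 h2
  exact (pa_le_iff hM a c).2 ⟨ad u w, by rw [← pa_add_assoc hM, hw, hu]⟩

lemma pa_succ_le_succ (hM : M ⊨ PATheory) {a b : M} (h : le' a b) : le' (sS a) (sS b) := by
  obtain ⟨w, hw⟩ := (pa_le_iff hM a b).1 h
  exact (pa_le_iff hM _ _).2 ⟨w, by rw [pa_q5 hM, hw]⟩

lemma pa_le_of_succ_le_succ (hM : M ⊨ PATheory) {a b : M} (h : le' (sS a) (sS b)) :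
    le' a b := by
  obtain ⟨w, hw⟩ := (pa_le_iff hM _ _).1 h
  rw [pa_q5 hM] at hw
  exact (pa_le_iff hM a b).2 ⟨w, pa_q2 hM _ _ hw⟩

lemma pa_le_zero (hM : M ⊨ PATheory) {a : M} (h : le' a z0) : a = z0 := by
  obtain ⟨w, hw⟩ := (pa_le_iff hM _ _).1 h
  by_cases ha : a = z0
  · exact ha
  · obtain ⟨b, hb⟩ := pa_q3 hM a ha
    rw [hb, pa_q5 hM] at hw
    exact absurd hw (pa_q1 hM _)

lemma pa_not_succ_le_self (hM : M ⊨ PATheory) : ∀ a : M, ¬ le' (sS a) a := by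
  have e : ∀ a : M, Formula.Realize
      (∼(leF (succT (Term.var (Sum.inr 0))) (Term.var (Sum.inr 0))) :
      Larith.Formula (Fin 0 ⊕ Fin 1)) (push (fun i => i.elim0) a) ↔
      ¬ le' (sS a) a := by
    intro a
    rw [Formula.realize_not, realize_leF, realize_succT]
    exact Iff.rfl
  intro a
  refine (e a).1 (pa_ind hM _ _ ((e z0).2 ?_) (fun b hb => (e (sS b)).2 ?_) a)
  · intro h
    have := pa_le_zero hM h
    exact pa_q1 hM z0 this
  · intro h
    exact (e b).1 hb (pa_le_of_succ_le_succ hM h)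

lemma pa_total (hM : M ⊨ PATheory) : ∀ a b : M, le' a b ∨ lt' b a := by
  intro a
  have e : ∀ b : M, ((leF (Term.var (Sum.inl 0)) (Term.var (Sum.inr 0)) ⊔
      ltF (Term.var (Sum.inr 0)) (Term.var (Sum.inl 0))) :
      Larith.Formula (Fin 1 ⊕ Fin 1)).Realize (push (fun _ => a) b) ↔
      (le' a b ∨ lt' b a) := by
    intro b
    rw [Formula.realize_sup, realize_leF, realize_ltF]
    exact Iff.rfl
  intro b
  refine (e b).1 (pa_ind hM _ _ ((e z0).2 ?_) (fun c hc => (e (sS c)).2 ?_) b)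
  · by_cases ha : a = z0
    · left; rw [ha]; exact pa_le_refl hM z0
    · obtain ⟨a', ha'⟩ := pa_q3 hM a ha
      right
      rw [ha']
      exact pa_succ_le_succ hM ((pa_le_iff hM _ _).2 ⟨a', pa_q4 hM a'⟩)
  · rcases (e c).1 hc with h | h
    · left
      obtain ⟨w, hw⟩ := (pa_le_iff hM _ _).1 h
      exact (pa_le_iff hM _ _).2 ⟨sS w, by rw [pa_succ_add hM, hw]⟩
    · obtain ⟨w, hw⟩ := (pa_le_iff hM _ _).1 h
      by_cases hw0 : w = z0
      · left
        rw [hw0, pa_zero_add hM] at hw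
        rw [← hw]
        exact pa_le_refl hM _
      · right
        obtain ⟨w', hw'⟩ := pa_q3 hM w hw0
        rw [hw', pa_succ_add hM] at hw
        exact (pa_le_iff hM _ _).2 ⟨w', by rw [pa_q5 hM, hw]⟩

lemma pa_lt_of_not_le (hM : M ⊨ PATheory) {x y : M} (h : ¬ le' y x) : lt' x y :=
  (pa_total hM y x).resolve_left h

lemma pa_le_of_not_lt (hM : M ⊨ PATheory) {x y : M} (h : ¬ lt' x y) : le' y x :=
  (pa_total hM y x).resolve_right h

lemma pa_lt_of_le_of_lt (hM : M ⊨ PATheory) {a b c : M} (h1 : le' a b) (h2 : lt' b c) :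
    lt' a c :=
  pa_le_trans hM (pa_succ_le_succ hM h1) h2

lemma pa_lt_le_absurd (hM : M ⊨ PATheory) {a b : M} (h1 : lt' a b) (h2 : le' b a) : False :=
  pa_not_succ_le_self hM a (pa_le_trans hM h1 h2)

lemma pa_le_succ_cases (hM : M ⊨ PATheory) {m n : M} (h : le' m (sS n)) :
    le' m n ∨ m = sS n := by
  obtain ⟨u, hu⟩ := (pa_le_iff hM _ _).1 h
  by_cases hu0 : u = z0
  · right
    rw [hu0, pa_zero_add hM] at hu
    exact hu
  · left
    obtain ⟨u', hu'⟩ := pa_q3 hM u hu0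
    rw [hu', pa_succ_add hM] at hu
    exact (pa_le_iff hM _ _).2 ⟨u', pa_q2 hM _ _ hu⟩

lemma pa_not_lt_zero (hM : M ⊨ PATheory) (w : M) : ¬ lt' w z0 := fun h =>
  pa_q1 hM w (pa_le_zero hM h)

lemma pa_lnp (hM : M ⊨ PATheory) (pf : Larith.Formula (Fin 2)) (t : M)
    (h : ∃ n : M, pfR pf n t) : ∃ n : M, IsMinProof pf t n := by
  by_contra hno
  have hnomin : ∀ n : M, pfR pf n t → ∃ w, lt' w n ∧ pfR pf w t := by
    intro n hn
    by_contra hc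
    push_neg at hc
    exact hno ⟨n, hn, fun w hw hpw => hc w hw hpw⟩
  have e : ∀ n : M, ((all1 (leF (Term.var (Sum.inr 0)) (Term.var (Sum.inl (Sum.inr 0))) ⟹
      ∼(app2 pf (Term.var (Sum.inr 0)) (Term.var (Sum.inl (Sum.inl 0)))))) :
      Larith.Formula (Fin 1 ⊕ Fin 1)).Realize (push (fun _ => t) n) ↔
      ∀ m : M, le' m n → ¬ pfR pf m t := by
    intro n
    rw [realize_all1]
    refine forall_congr' fun m => ?_
    rw [Formula.realize_imp, Formula.realize_not, realize_leF, realize_app2]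
    exact Iff.rfl
  have claim : ∀ n m : M, le' m n → ¬ pfR pf m t := by
    intro n
    refine (e n).1 (pa_ind hM _ _ ((e z0).2 ?_) (fun b hb => (e (sS b)).2 ?_) n)
    · intro m hm hpm
      rw [pa_le_zero hM hm] at hpm
      obtain ⟨w, hw, _⟩ := hnomin z0 hpm
      exact pa_not_lt_zero hM w hw
    · intro m hm hpm
      rcases pa_le_succ_cases hM hm with hle | heq
      · exact (e b).1 hb m hle hpm
      · rw [heq] at hpm
        obtain ⟨w, hw, hpw⟩ := hnomin (sS b) hpm
        exact (e b).1 hb w (pa_le_of_succ_le_succ hM hw) hpw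
  obtain ⟨n, hn⟩ := h
  exact claim n n (pa_le_refl hM n) hn

end PAFacts
/-- For every standard sentence `s` in the language of `T`:
if `T ⊢ ¬D(E_s(v))` then `T ⊢ remote(⁰⌜s⌝)`; and if `T ⊢ D(E_s(v))` then
`T ⊢ ¬remote(⁰⌜s⌝)`. -/
theorem statement_1 (T : Larith.Theory) (hPA : PATheory ⊆ T) (hcon : Consistent T)
    (G : GodelSetting T) (hdgn : DgnRepresents T G) (s : Larith.Sentence) :
    (Proves T (∼(G.diag (extFormula G.ProofF (G.code s)))) →
      Proves T (remoteAt G.ProofF G.DgnF (num (G.code s)))) ∧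
    (Proves T (G.diag (extFormula G.ProofF (G.code s))) →
      Proves T (∼(remoteAt G.ProofF G.DgnF (num (G.code s))))) := by
  classical
  constructor
  · -- T ⊢ ¬D(E_s) → T ⊢ remote(⌜s⌝)
    intro h Mod vv xs
    have hxs : xs = default := funext fun i => i.elim0
    subst hxs
    haveI : (Mod : Type) ⊨ T := Mod.is_model
    have hMPA : (Mod : Type) ⊨ PATheory := Theory.Model.mono Mod.is_model hPA
    have toM : ∀ {σ : Larith.Sentence}, Proves T σ → (Mod : Type) ⊨ σ := by
      intro σ hp
      exact hp Mod default default
    -- representability facts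
    have hd1 : pfR G.DgnF (numVal (G.code (G.diag (extFormula G.ProofF (G.code s)))))
        (numVal (G.code s) : Mod) := by
      have := toM (hdgn.1 s)
      unfold Sentence.Realize at this
      rw [realize_app2, realize_num, realize_num] at this
      exact this
    -- diagonal lemma in the model
    have hdiag := toM (G.diag_spec (extFormula G.ProofF (G.code s)))
    unfold Sentence.Realize at hdiag
    rw [Formula.realize_iff, realize_app1, extFormula, realize_extFormulaAt,
      realize_num] at hdiag
    -- negation of the diagonal sentence holds in the model
    have hnd := toM h
    rw [Sentence.realize_not] at hnd
    have hne : ¬ ∀ x y : Mod, pfR G.ProofF x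
        (Term.realize (fun _ => numVal (G.code (G.diag (extFormula G.ProofF (G.code s)))))
          (Term.var (0 : Fin 1))) →
        IsMinProof G.ProofF (numVal (G.code s)) y → le' y x := fun he => hnd (hdiag.2 he)
    push_neg at hne
    obtain ⟨x, y, hx, hy, hxy⟩ := hne
    have hxval : pfR G.ProofF x
        (numVal (G.code (G.diag (extFormula G.ProofF (G.code s))))) := hx
    have hltxy : lt' x y := pa_lt_of_not_le hMPA hxy
    obtain ⟨z, hz⟩ := pa_lnp hMPA G.ProofF _ ⟨x, hxval⟩
    have hzx : le' z x := by
      refine pa_le_of_not_lt hMPA fun hlt => ?_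
      exact hz.2 x hlt hxval
    have hzy : lt' z y := pa_lt_of_le_of_lt hMPA hzx hltxy
    show Formula.Realize (remoteAt G.ProofF G.DgnF (num (G.code s))) vv
    rw [realize_remoteAt, realize_num]
    exact ⟨numVal (G.code (G.diag (extFormula G.ProofF (G.code s)))), y, z, hd1, hy, hz, hzy⟩
  · -- T ⊢ D(E_s) → T ⊢ ¬remote(⌜s⌝)
    intro h Mod vv xs
    have hxs : xs = default := funext fun i => i.elim0
    subst hxs
    haveI : (Mod : Type) ⊨ T := Mod.is_model
    have hMPA : (Mod : Type) ⊨ PATheory := Theory.Model.mono Mod.is_model hPA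
    have toM : ∀ {σ : Larith.Sentence}, Proves T σ → (Mod : Type) ⊨ σ := by
      intro σ hp
      exact hp Mod default default
    -- uniqueness half of representability
    have hd2 : ∀ a : Mod, pfR G.DgnF a (numVal (G.code s)) →
        a = numVal (G.code (G.diag (extFormula G.ProofF (G.code s)))) := by
      have := toM (hdgn.2 s)
      unfold Sentence.Realize at this
      rw [realize_all1] at this
      intro a ha
      have h2 := this a
      rw [Formula.realize_imp, realize_app2, realize_num, Formula.realize_equal,
        realize_num] at h2
      exact h2 ha
    -- the diagonal sentence (hence the extension at its own code) holds
    have hdiag := toM (G.diag_spec (extFormula G.ProofF (G.code s)))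
    unfold Sentence.Realize at hdiag
    rw [Formula.realize_iff, realize_app1, extFormula, realize_extFormulaAt,
      realize_num] at hdiag
    have hE := hdiag.1 (toM h)
    show Formula.Realize (∼(remoteAt G.ProofF G.DgnF (num (G.code s)))) vv
    rw [Formula.realize_not, realize_remoteAt, realize_num]
    rintro ⟨X, K, Z, hdX, hK, hZ, hZK⟩
    have hXval := hd2 X hdX
    rw [hXval] at hZ
    have hKZ : le' K Z := hE Z K hZ.1 hK
    exact pa_lt_le_absurd hMPA hZK hKZ

end GodelStalk
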